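/- Let n ≥ 2, σ > 0, l > 0, and let f : [−l, l] → ℝ be continuously differentiable with 2·f′(t) + n·f(t)² + σ/(n−1) ≤ 0 for all t ∈ [−l, l]. Then 2l < 2π·√((n−1)/(σ·n)). -/

import Mathlib

/-- The ODE kernel of Gromov's torical band-width inequality: a C¹ function
`f` on `[-l, l]` satisfying the Riccati inequality `2 f' + n f² + σ/(n-1) ≤ 0`
forces `2 l < 2π √((n-1)/(σ n))`. -/
theorem torical_band_riccati_width (n : ℕ) (hn : 2 ≤ n) (σ l : ℝ) (hσ : 0 < σ)
    (hl : 0 < l) (f f' : ℝ → ℝ)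
    (hderiv : ∀ t ∈ Set.Icc (-l) l, HasDerivAt f (f' t) t)
    (hcont : ContinuousOn f' (Set.Icc (-l) l))
    (hineq : ∀ t ∈ Set.Icc (-l) l,
      2 * f' t + (n : ℝ) * (f t) ^ 2 + σ / ((n : ℝ) - 1) ≤ 0) :
    2 * l < 2 * Real.pi * Real.sqrt (((n : ℝ) - 1) / (σ * n)) := by
  have hn1 : (1 : ℝ) ≤ (n : ℝ) - 1 := by
    have : (2 : ℝ) ≤ (n : ℝ) := by exact_mod_cast hn
    linarith
  have hn1' : (0 : ℝ) < (n : ℝ) - 1 := by linarith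
  have hnpos : (0 : ℝ) < (n : ℝ) := by linarith
  set K : ℝ := σ * n / ((n : ℝ) - 1) with hK
  have hKpos : 0 < K := by positivity
  set a : ℝ := Real.sqrt K / 2 with ha
  have hapos : 0 < a := by positivity
  have ha2 : a ^ 2 = K / 4 := by
    rw [ha, div_pow, Real.sq_sqrt hKpos.le]; norm_num
  -- g = (n/2) f, with g' ≤ -(g² + a²)
  set g : ℝ → ℝ := fun t => (n : ℝ) / 2 * f t with hg
  set g' : ℝ → ℝ := fun t => (n : ℝ) / 2 * f' t with hg'
  have hgderiv : ∀ t ∈ Set.Icc (-l) l, HasDerivAt g (g' t) t := fun t ht =>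
    (hderiv t ht).const_mul _
  have hgineq : ∀ t ∈ Set.Icc (-l) l, g' t ≤ -((g t) ^ 2 + a ^ 2) := by
    intro t ht
    have h1 := hineq t ht
    have hσn : σ / ((n : ℝ) - 1) = K / (n : ℝ) := by
      field_simp [hK]
      rw [hK]
      field_simp
    rw [hσn] at h1
    simp only [hg, hg']
    rw [ha2]
    have hKn : K / (n : ℝ) * (n:ℝ) = K := by field_simp
    nlinarith [sq_nonneg (f t), hnpos, hKpos]
  -- F t = arctan (g t / a) + a * t is antitone on [-l, l]
  set F : ℝ → ℝ := fun t => Real.arctan (g t / a) + a * t with hF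
  have hFderiv : ∀ t ∈ Set.Icc (-l) l,
      HasDerivAt F (1 / (1 + (g t / a) ^ 2) * (g' t / a) + a) t := by
    intro t ht
    have h1 : HasDerivAt (fun t => g t / a) (g' t / a) t := (hgderiv t ht).div_const a
    have h2 := (Real.hasDerivAt_arctan (g t / a)).comp t h1
    have h3 : HasDerivAt (fun t : ℝ => a * t) a t := by
      simpa using (hasDerivAt_id t).const_mul a
    exact h2.add h3
  have hFderiv_nonpos : ∀ t ∈ Set.Icc (-l) l,
      1 / (1 + (g t / a) ^ 2) * (g' t / a) + a ≤ 0 := by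
    intro t ht
    have hpos : 0 < a ^ 2 + (g t) ^ 2 := by positivity
    have key : 1 / (1 + (g t / a) ^ 2) * (g' t / a) = a * g' t / (a ^ 2 + (g t) ^ 2) := by
      field_simp
    rw [key]
    have h1 : a * g' t ≤ a * (-((g t) ^ 2 + a ^ 2)) :=
      mul_le_mul_of_nonneg_left (hgineq t ht) hapos.le
    rw [div_add' _ _ _ hpos.ne']
    apply div_nonpos_of_nonpos_of_nonneg _ hpos.le
    nlinarith
  have hFanti : AntitoneOn F (Set.Icc (-l) l) := by
    have hconv : Convex ℝ (Set.Icc (-l) l) := convex_Icc _ _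
    have hcontF : ContinuousOn F (Set.Icc (-l) l) := fun t ht =>
      ((hFderiv t ht).continuousAt).continuousWithinAt
    refine antitoneOn_of_deriv_nonpos hconv hcontF ?_ ?_
    · intro t ht
      rw [interior_Icc] at ht
      exact ((hFderiv t (Set.mem_Icc_of_Ioo ht)).differentiableAt).differentiableWithinAt
    intro t ht
    rw [interior_Icc] at ht
    have ht' : t ∈ Set.Icc (-l) l := Set.mem_Icc_of_Ioo ht
    rw [(hFderiv t ht').deriv]
    exact hFderiv_nonpos t ht'
  have hmem1 : (-l) ∈ Set.Icc (-l) l := by constructor <;> linarith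
  have hmem2 : l ∈ Set.Icc (-l) l := by constructor <;> linarith
  have hFF := hFanti hmem1 hmem2 (by linarith)
  -- from F l ≤ F (-l): 2 a l < π
  have harc1 : Real.arctan (g (-l) / a) < Real.pi / 2 := Real.arctan_lt_pi_div_two _
  have harc2 : -(Real.pi / 2) < Real.arctan (g l / a) := Real.neg_pi_div_two_lt_arctan _
  have hwidth : 2 * a * l < Real.pi := by
    simp only [hF] at hFF
    nlinarith
  -- conclude
  have hsqrt : Real.sqrt (((n : ℝ) - 1) / (σ * n)) = (Real.sqrt K)⁻¹ := by
    rw [show ((n : ℝ) - 1) / (σ * n) = K⁻¹ by rw [hK, inv_div], Real.sqrt_inv]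
  rw [hsqrt]
  have hsK : 0 < Real.sqrt K := Real.sqrt_pos.mpr hKpos
  rw [mul_comm (2 * Real.pi) _, ← div_eq_inv_mul, lt_div_iff₀ hsK]
  have : a = Real.sqrt K / 2 := ha
  nlinarith
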